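/- Let μ and ν be Borel probability measures on ℝ supported on [0,∞) with ν ≠ δ₀, and let z ∈ ℂ⁺. Then z·G_ν(z) − 1 ≠ 0, (1−x)·z·G_ν(z) + x ≠ 0 for all x ≥ 0, and ∫_{[0,∞)} G_ν(z)/((1−x)·z·G_ν(z)+x) dμ(x) = [G_ν(z)/(z·G_ν(z)−1)] · G_μ(z·G_ν(z)/(z·G_ν(z)−1)). (This is the Cauchy-transform identity showing that the distribution of √X Y √X for monotonically independent X−1, Y with distributions μ, ν is the multiplicative monotone convolution μ ⟳ ν, characterized by K_{μ⟳ν} = K_μ ∘ K_ν.) -/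

import Mathlib

open MeasureTheory

/-- The Cauchy transform `G_ρ(z) = ∫ 1/(z−t) dρ(t)` of a measure on `ℝ`. -/
noncomputable def cauchyTransform (ρ : Measure ℝ) (z : ℂ) : ℂ := ∫ t, (z - (t : ℂ))⁻¹ ∂ρ


theorem aux_dirac (ν : Measure ℝ) [IsProbabilityMeasure ν] (h : ν ({0}ᶜ) = 0) : ν = Measure.dirac 0 := by
  have h1 : ν {0} = 1 := by
    have := prob_compl_eq_one_sub (μ := ν) (measurableSet_singleton (0:ℝ)).compl
    rwa [compl_compl, h, tsub_zero] at this
  ext s hs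
  rw [Measure.dirac_apply' _ hs]
  by_cases h0 : (0:ℝ) ∈ s
  · have hle : ν {0} ≤ ν s := measure_mono (Set.singleton_subset_iff.mpr h0)
    have hle2 : ν s ≤ 1 := prob_le_one
    rw [Set.indicator_of_mem h0]
    exact le_antisymm hle2 (by simpa [h1] using hle)
  · have hle : ν s ≤ ν {0}ᶜ := measure_mono (fun x hx => by
      simp only [Set.mem_compl_iff, Set.mem_singleton_iff]
      rintro rfl; exact h0 hx)
    rw [Set.indicator_of_notMem h0]
    exact le_antisymm (h ▸ hle) zero_le

theorem aux_im_neg (ν : Measure ℝ) [IsProbabilityMeasure ν]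
    (hν : ν (Set.Iio 0) = 0) (hν0 : ν ≠ Measure.dirac 0)
    (z : ℂ) (hz : 0 < z.im) :
    (z * (∫ t, (z - (t : ℂ))⁻¹ ∂ν)).im < 0 := by
  have hne : ∀ t : ℝ, z - (t : ℂ) ≠ 0 := fun t h => by
    have : (z - (t:ℂ)).im = 0 := by rw [h]; simp
    simp at this; linarith
  -- integrability
  have hmeas : AEStronglyMeasurable (fun t : ℝ => z * (z - (t:ℂ))⁻¹) ν := by
    apply Continuous.aestronglyMeasurable
    exact continuous_const.mul ((continuous_const.sub Complex.continuous_ofReal).inv₀ hne)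
  have hint : Integrable (fun t : ℝ => z * (z - (t:ℂ))⁻¹) ν := by
    refine (integrable_const (‖z‖ / z.im)).mono' hmeas ?_
    refine Filter.Eventually.of_forall fun t => ?_
    rw [norm_mul, norm_inv]
    have h1 : z.im ≤ ‖z - (t:ℂ)‖ := by
      have := Complex.abs_im_le_norm (z - (t:ℂ))
      simp only [Complex.sub_im, Complex.ofReal_im, sub_zero] at this
      calc z.im ≤ |z.im| := le_abs_self _
        _ ≤ ‖z - (t:ℂ)‖ := this
    have h2 : (0:ℝ) < ‖z - (t:ℂ)‖ := lt_of_lt_of_le hz h1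
    rw [div_eq_mul_inv]
    gcongr
  have him : ∀ t : ℝ, (z * (z - (t:ℂ))⁻¹).im = -t * z.im / Complex.normSq (z - (t:ℂ)) := by
    intro t
    rw [Complex.mul_im, Complex.inv_im, Complex.inv_re]
    simp only [Complex.sub_re, Complex.sub_im, Complex.ofReal_re, Complex.ofReal_im, sub_zero]
    ring
  -- rewrite integral
  have key : (z * ∫ t, (z - (t:ℂ))⁻¹ ∂ν).im = ∫ t, -t * z.im / Complex.normSq (z - (t:ℂ)) ∂ν := by
    rw [← integral_const_mul]
    have h2 := integral_im hint
    simp only [RCLike.im_to_complex] at h2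
    rw [← h2]
    exact integral_congr_ae (Filter.Eventually.of_forall fun t => him t)
  rw [key]
  -- nonneg version
  have hintg : Integrable (fun t : ℝ => -(-t * z.im / Complex.normSq (z - (t:ℂ)))) ν := by
    have h3 := hint.im.neg
    refine h3.congr (Filter.Eventually.of_forall fun t => ?_)
    simp only [Pi.neg_apply, RCLike.im_to_complex, him t]
  have hae0 : ∀ᵐ t ∂ν, 0 ≤ t := by
    rw [Filter.eventually_iff, mem_ae_iff]
    convert hν using 2
    ext t; simp [Set.Iio, not_le]
  have hnn : 0 ≤ᵐ[ν] fun t => -(-t * z.im / Complex.normSq (z - (t:ℂ))) := by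
    filter_upwards [hae0] with t ht
    have hsq : 0 ≤ Complex.normSq (z - (t:ℂ)) := Complex.normSq_nonneg _
    rw [neg_mul, neg_div, neg_neg]
    exact div_nonneg (mul_nonneg ht hz.le) hsq
  have hnonneg : 0 ≤ ∫ t, -(-t * z.im / Complex.normSq (z - (t:ℂ))) ∂ν :=
    integral_nonneg_of_ae hnn
  rw [integral_neg] at hnonneg
  rcases lt_or_eq_of_le hnonneg with h | h
  · linarith
  · exfalso
    have hz0 : ∫ t, -(-t * z.im / Complex.normSq (z - (t:ℂ))) ∂ν = 0 := by
      rw [integral_neg]; linarith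
    have := (integral_eq_zero_iff_of_nonneg_ae hnn hintg).mp hz0
    have hae : ∀ᵐ t ∂ν, t = 0 := by
      filter_upwards [this, hae0] with t ht ht0
      simp only [Pi.zero_apply, neg_eq_zero, div_eq_zero_iff] at ht
      rcases ht with ht | ht
      · rcases mul_eq_zero.mp ht with h1 | h1
        · linarith
        · linarith
      · exact absurd (Complex.normSq_eq_zero.mp ht) (hne t)
    apply hν0
    apply aux_dirac
    rw [← compl_compl ({0}ᶜ : Set ℝ)] at *
    have : ν {t : ℝ | ¬ t = 0} = 0 := hae
    convert this using 2
    ext t; simp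

/-- The Cauchy-transform identity for the multiplicative monotone convolution:
for probability measures on `[0,∞)` with `ν ≠ δ₀` and `z` in the upper half-plane,
`∫ G_ν(z)/((1−x)·z·G_ν(z)+x) dμ(x) = [G_ν(z)/(z·G_ν(z)−1)] · G_μ(z·G_ν(z)/(z·G_ν(z)−1))`. -/
theorem monotone_multiplicative_cauchy_transform
    (μ ν : Measure ℝ) [IsProbabilityMeasure μ] [IsProbabilityMeasure ν]
    (hμ : μ (Set.Iio 0) = 0) (hν : ν (Set.Iio 0) = 0) (hν0 : ν ≠ Measure.dirac 0)
    (z : ℂ) (hz : 0 < z.im) :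
    z * cauchyTransform ν z - 1 ≠ 0 ∧
    (∀ x : ℝ, 0 ≤ x → (1 - (x : ℂ)) * z * cauchyTransform ν z + (x : ℂ) ≠ 0) ∧
    ∫ x, cauchyTransform ν z / ((1 - (x : ℂ)) * z * cauchyTransform ν z + (x : ℂ)) ∂μ
      = cauchyTransform ν z / (z * cauchyTransform ν z - 1) *
          cauchyTransform μ (z * cauchyTransform ν z / (z * cauchyTransform ν z - 1)) := by
  set G := cauchyTransform ν z with hG
  have hI : (z * G).im < 0 := aux_im_neg ν hν hν0 z hz
  have h1 : z * G - 1 ≠ 0 := by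
    intro h
    have : (z * G - 1).im = 0 := by rw [h]; simp
    rw [Complex.sub_im, Complex.one_im, sub_zero] at this
    linarith
  have h2 : ∀ x : ℝ, 0 ≤ x → (1 - (x : ℂ)) * z * G + (x : ℂ) ≠ 0 := by
    intro x hx h
    by_cases hx1 : x = 1
    · subst hx1
      simp at h
    · have e : (1 - (x:ℂ)) * z * G + (x:ℂ) = ((1-x : ℝ):ℂ) * (z*G) + ((x:ℝ):ℂ) := by
        push_cast; ring
      have him : ((1 - (x:ℂ)) * z * G + (x:ℂ)).im = (1-x) * (z*G).im := by
        rw [e, Complex.add_im, Complex.ofReal_im, add_zero, Complex.mul_im,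
          Complex.ofReal_re, Complex.ofReal_im]
        ring
      rw [h, Complex.zero_im] at him
      rcases mul_eq_zero.mp him.symm with hh | hh
      · exact hx1 (by linarith)
      · linarith
  refine ⟨h1, h2, ?_⟩
  set w := z * G / (z * G - 1) with hw
  have hae0 : ∀ᵐ x : ℝ ∂μ, 0 ≤ x := by
    rw [ae_iff]
    convert hμ using 2
    ext t; simp [Set.Iio, not_le]
  have heq : ∀ᵐ x : ℝ ∂μ, G / ((1 - (x:ℂ)) * z * G + (x:ℂ))
      = G / (z * G - 1) * (w - (x:ℂ))⁻¹ := by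
    filter_upwards [hae0] with x hx
    have hA := h2 x hx
    have hwx : w - (x:ℂ) = ((1 - (x:ℂ)) * z * G + (x:ℂ)) / (z * G - 1) := by
      rw [hw]; field_simp; ring
    rw [hwx, inv_div]
    field_simp
    have h1' : G * z - 1 ≠ 0 := by rw [mul_comm]; exact h1
    rw [mul_div_mul_right _ _ h1']
  calc ∫ x, G / ((1 - (x:ℂ)) * z * G + (x:ℂ)) ∂μ
      = ∫ x, G / (z * G - 1) * (w - (x:ℂ))⁻¹ ∂μ := integral_congr_ae heq
    _ = G / (z * G - 1) * ∫ x, (w - (x:ℂ))⁻¹ ∂μ := integral_const_mul _ _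
    _ = G / (z * G - 1) * cauchyTransform μ w := rfl
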